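/- Let D ≥ 2 be a natural number and B > 0. Let h : ℝ^D → ℝ be a function for which there exist finitely many D-simplices S₁, …, S_M (each the convex hull of D + 1 affinely independent points of ℝ^D) with pairwise disjoint interiors whose union contains [−B, B]^D, and affine functions ℓ₁, …, ℓ_M : ℝ^D → ℝ such that h(x) = ℓ_m(x) for every x in the interior of S_m and every m. Then for every δ > 0 there exist a natural number N, an affine function g₀ : ℝ^D → ℝ, and for each j ∈ {1, …, N} affine functions h_{1,j}, …, h_{D,j} : ℝ^D → ℝ, strictly positive reals μ_{1,j}, …, μ_{D−1,j}, and a real coefficient cⱼ, such that, with F^{(j)} the fan-shaped function built from (h_{1,j}, …, h_{D,j}) and (μ_{1,j}, …, μ_{D−1,j}), the Lebesgue measure of { x ∈ [−B, B]^D : h(x) ≠ g₀(x) + Σ_{j=1}^{N} cⱼ·F^{(j)}(x) } is less than δ. (This is the wide-network half of the ReLU duality theorem for multivariate networks, stated for piecewise affine functions over a simplicial cover.) -/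

import Mathlib

open MeasureTheory

/-- A function `(Fin D → ℝ) → ℝ` is affine if it is of the form
`x ↦ ∑ d, w d * x d + r`. -/
def IsAffineFn {D : ℕ} (g : (Fin D → ℝ) → ℝ) : Prop :=
  ∃ (w : Fin D → ℝ) (r : ℝ), ∀ x, g x = (∑ d, w d * x d) + r

/-- The fan-shaped function on `ℝ^D` built from the (0-indexed) affine functions
`h 0, …, h (D-1)` and positive factors `μ 0, …, μ (D-2)` via `F 0 = h 0` and
`F (j+1) x = σ(F j x - μ j * σ(h (j+1) x))` where `σ(u) = max u 0` is ReLU;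
the fan-shaped function itself is `fan h μ (D - 1)`. -/
noncomputable def fan {D : ℕ} (h : ℕ → (Fin D → ℝ) → ℝ) (μ : ℕ → ℝ) :
    ℕ → (Fin D → ℝ) → ℝ
  | 0 => h 0
  | j + 1 => fun x => max (fan h μ j x - μ j * max (h (j + 1) x) 0) 0


namespace ReluAux

variable {D : ℕ}

/-! ### IsAffineFn lemmas -/

lemma isAffineFn_const (c : ℝ) : IsAffineFn (fun _ : Fin D → ℝ => c) :=
  ⟨0, c, fun x => by simp⟩

lemma affine_add {f g : (Fin D → ℝ) → ℝ} (hf : IsAffineFn f) (hg : IsAffineFn g) :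
    IsAffineFn (fun x => f x + g x) := by
  obtain ⟨w, r, hw⟩ := hf; obtain ⟨w', r', hw'⟩ := hg
  exact ⟨w + w', r + r', fun x => by simp [hw, hw', Finset.sum_add_distrib, add_mul]; ring⟩

lemma affine_addConst {f : (Fin D → ℝ) → ℝ} (hf : IsAffineFn f) (c : ℝ) :
    IsAffineFn (fun x => f x + c) :=
  affine_add hf (isAffineFn_const c)

lemma affine_smul {f : (Fin D → ℝ) → ℝ} (hf : IsAffineFn f) (c : ℝ) :
    IsAffineFn (fun x => c * f x) := by
  obtain ⟨w, r, hw⟩ := hf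
  refine ⟨fun d => c * w d, c * r, fun x => ?_⟩
  show c * f x = _
  rw [hw, mul_add, Finset.mul_sum]
  congr 1
  exact Finset.sum_congr rfl fun d _ => by ring

lemma affine_neg {f : (Fin D → ℝ) → ℝ} (hf : IsAffineFn f) :
    IsAffineFn (fun x => -(f x)) := by
  have := affine_smul hf (-1); simpa using this

lemma isAffineFn_affineMap (f : (Fin D → ℝ) →ᵃ[ℝ] ℝ) : IsAffineFn (fun x => f x) := by
  refine ⟨fun d => f.linear (Pi.single d 1), f 0, fun x => ?_⟩
  have hx : f x = f.linear x + f 0 := by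
    have := f.map_vadd 0 x
    simpa [vadd_eq_add] using this
  show f x = _
  rw [hx]
  congr 1
  have hxdec : x = ∑ d, x d • (Pi.single d 1 : Fin D → ℝ) := by
    ext j
    simp [Finset.sum_apply, Pi.single_apply]
  conv_lhs => rw [hxdec]
  rw [map_sum]
  congr 1; ext d
  simp [mul_comm]

lemma affine_continuous {f : (Fin D → ℝ) → ℝ} (hf : IsAffineFn f) : Continuous f := by
  obtain ⟨w, r, hw⟩ := hf
  have : f = fun x => (∑ d, w d * x d) + r := funext hw
  rw [this]
  exact (continuous_finset_sum _ fun d _ => (continuous_const.mul (continuous_apply d))).add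
    continuous_const

lemma affine_bound {f : (Fin D → ℝ) → ℝ} (hf : IsAffineFn f) (B : ℝ) (hB : 0 ≤ B) :
    ∃ C : ℝ, 0 ≤ C ∧ ∀ x ∈ Set.Icc (fun _ => -B) (fun _ => (B:ℝ)), |f x| ≤ C := by
  obtain ⟨w, r, hw⟩ := hf
  refine ⟨(∑ d, |w d|) * B + |r|, by positivity, fun x hx => ?_⟩
  obtain ⟨h1, h2⟩ := hx
  rw [hw]
  refine (abs_add_le _ _).trans (add_le_add ?_ le_rfl)
  refine (Finset.abs_sum_le_sum_abs _ _).trans ?_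
  rw [Finset.sum_mul]
  refine Finset.sum_le_sum fun d _ => ?_
  rw [abs_mul]
  exact mul_le_mul_of_nonneg_left (abs_le.2 ⟨h1 d, h2 d⟩) (abs_nonneg _)

/-! ### fan lemmas -/

variable {h : ℕ → (Fin D → ℝ) → ℝ} {μ : ℕ → ℝ} {x : Fin D → ℝ}

lemma fan_le_max (hμ : ∀ j, 0 ≤ μ j) : ∀ n, fan h μ (n+1) x ≤ max (h 0 x) 0 := by
  intro n
  induction n with
  | zero =>
      show max (h 0 x - μ 0 * max (h 1 x) 0) 0 ≤ max (h 0 x) 0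
      exact max_le_max (by nlinarith [hμ 0, le_max_right (h 1 x) 0]) le_rfl
  | succ n ih =>
      show max (fan h μ (n+1) x - μ (n+1) * max (h (n+2) x) 0) 0 ≤ max (h 0 x) 0
      refine max_le ?_ (le_max_right _ _)
      nlinarith [hμ (n+1), le_max_right (h (n+2) x) 0]

lemma fan_nonneg (n : ℕ) : 0 ≤ fan h μ (n+1) x := le_max_right _ _

lemma fan_all_le (hμ : ∀ j, 0 ≤ μ j) : ∀ n, fan h μ n x ≤ max (h 0 x) 0
  | 0 => le_max_left _ _
  | n + 1 => fan_le_max hμ n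

lemma fan_eq_max_of_cuts_nonpos (hc : ∀ t, h (t+1) x ≤ 0) :
    ∀ n, fan h μ (n+1) x = max (h 0 x) 0 := by
  intro n
  induction n with
  | zero =>
      show max (h 0 x - μ 0 * max (h 1 x) 0) 0 = max (h 0 x) 0
      rw [max_eq_right (hc 0), mul_zero, sub_zero]
  | succ n ih =>
      show max (fan h μ (n+1) x - μ (n+1) * max (h (n+2) x) 0) 0 = max (h 0 x) 0
      rw [max_eq_right (hc (n+1)), mul_zero, sub_zero, ih]
      exact max_eq_left (le_max_right _ _)

lemma fan_eq_zero_of_head (hμ : ∀ j, 0 ≤ μ j) (hh : max (h 0 x) 0 = 0) (n : ℕ) :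
    fan h μ (n+1) x = 0 :=
  le_antisymm (hh ▸ fan_le_max hμ n) (fan_nonneg n)

lemma fan_eq_zero_of_kill (hμ : ∀ j, 0 ≤ μ j) (t : ℕ)
    (hkill : max (h 0 x) 0 ≤ μ t * max (h (t+1) x) 0) :
    ∀ n, t < n → fan h μ n x = 0 := by
  have base : fan h μ (t+1) x = 0 := by
    show max (fan h μ t x - μ t * max (h (t+1) x) 0) 0 = 0
    rw [max_eq_right]
    have := fan_all_le (h := h) (μ := μ) (x := x) hμ t
    linarith
  intro n hn
  induction n with
  | zero => omega
  | succ n ih =>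
      rcases Nat.lt_succ_iff_lt_or_eq.1 hn with hlt | heq
      · have h0 : fan h μ n x = 0 := ih hlt
        show max (fan h μ n x - μ n * max (h (n+1) x) 0) 0 = 0
        rw [h0, max_eq_right]
        nlinarith [hμ n, le_max_right (h (n+1) x) 0]
      · rw [← heq]; exact base

/-! ### block machinery -/

def blockFn (p : (Fin D → ℝ) → ℝ) (q : ℕ → (Fin D → ℝ) → ℝ) : ℕ → (Fin D → ℝ) → ℝ
  | 0 => p
  | t + 1 => q t

noncomputable def cutsOf (lam : Fin (D+1) → (Fin D → ℝ) → ℝ) (Jc : Finset (Fin (D+1))) :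
    ℕ → (Fin D → ℝ) → ℝ :=
  fun t => (Jc.toList.map (fun j => fun y => -(lam j y))).getD t (fun _ => (-1 : ℝ))

lemma cutsOf_cases (lam : Fin (D+1) → (Fin D → ℝ) → ℝ) (Jc : Finset (Fin (D+1))) (t : ℕ) :
    cutsOf lam Jc t = (fun _ => (-1:ℝ)) ∨ ∃ j ∈ Jc, cutsOf lam Jc t = fun y => -(lam j y) := by
  unfold cutsOf
  set l := Jc.toList.map (fun j => fun y => -(lam j y)) with hl
  rcases lt_or_ge t l.length with hlt | hge
  · right
    rw [List.getD_eq_getElem l _ hlt]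
    have hmem : l[t] ∈ l := List.getElem_mem hlt
    obtain ⟨j, hj, hje⟩ := List.mem_map.1 hmem
    exact ⟨j, Finset.mem_toList.1 hj, hje.symm⟩
  · left
    exact List.getD_eq_default l _ hge

lemma cutsOf_mem (lam : Fin (D+1) → (Fin D → ℝ) → ℝ) (Jc : Finset (Fin (D+1)))
    {j : Fin (D+1)} (hj : j ∈ Jc) :
    ∃ t, t < Jc.card ∧ cutsOf lam Jc t = fun y => -(lam j y) := by
  have hjl : j ∈ Jc.toList := Finset.mem_toList.2 hj
  obtain ⟨t, ht, hte⟩ := List.mem_iff_getElem.1 hjl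
  refine ⟨t, by simpa [Finset.length_toList] using ht, ?_⟩
  unfold cutsOf
  have hlen : t < (Jc.toList.map (fun j => fun y => -(lam j y))).length := by
    simpa using ht
  rw [List.getD_eq_getElem _ _ hlen, List.getElem_map, hte]

/-- the index type for blocks attached to one constraint set -/
abbrev KT (D : ℕ) := (Fin (D+1) × Bool) ⊕ Bool

def sgn (D : ℕ) (J : Finset (Fin (D+1))) : ℝ := (-1)^D * (-1)^J.card

noncomputable def coefOf (D : ℕ) (cv : Fin (D+1) → ℝ) (η : ℝ)
    (J : Finset (Fin (D+1))) (k : KT D) : ℝ :=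
  if 1 ≤ J.card ∧ J.card ≤ D - 1 then
    match k with
    | .inr true => sgn D J
    | .inr false => -sgn D J
    | .inl _ => 0
  else if J.card = D then
    match k with
    | .inl (j, true) => if j ∈ J then sgn D J * (∑ i ∈ Jᶜ, cv i) / (D * η) else 0
    | .inl (j, false) =>
        if j ∈ J then sgn D J * ((cv j - ∑ i ∈ Jᶜ, cv i) - (∑ i ∈ Jᶜ, cv i) / (D * η)) else 0
    | .inr _ => 0
  else 0

noncomputable def headOf (lam : Fin (D+1) → (Fin D → ℝ) → ℝ) (ℓm : (Fin D → ℝ) → ℝ)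
    (Θ η : ℝ) (J : Finset (Fin (D+1))) (k : KT D) : (Fin D → ℝ) → ℝ :=
  if J.card = D then
    match k with
    | .inl (j, true) => fun x => lam j x + η
    | .inl (j, false) => lam j
    | .inr _ => fun _ => 0
  else
    match k with
    | .inr true => fun x => ℓm x + Θ
    | .inr false => fun _ => Θ
    | .inl _ => fun _ => 0

def cutSet (D : ℕ) (J : Finset (Fin (D+1))) (k : KT D) : Finset (Fin (D+1)) :=
  match k with
  | .inl (j, _) => J.erase j
  | .inr _ => J

lemma isAffineFn_headOf (lam : Fin (D+1) → (Fin D → ℝ) → ℝ) (ℓm : (Fin D → ℝ) → ℝ)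
    (Θ η : ℝ) (J : Finset (Fin (D+1))) (k : KT D)
    (hlam : ∀ i, IsAffineFn (lam i)) (hℓ : IsAffineFn ℓm) :
    IsAffineFn (headOf lam ℓm Θ η J k) := by
  unfold headOf
  split
  · rcases k with ⟨j, _ | _⟩ | b
    · exact hlam j
    · exact affine_addConst (hlam j) η
    · exact isAffineFn_const 0
  · rcases k with ⟨j, b⟩ | (_ | _)
    · exact isAffineFn_const 0
    · exact isAffineFn_const Θ
    · exact affine_addConst hℓ Θ

lemma isAffineFn_blockFn_cuts (lam : Fin (D+1) → (Fin D → ℝ) → ℝ)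
    (p : (Fin D → ℝ) → ℝ) (Jc : Finset (Fin (D+1)))
    (hlam : ∀ i, IsAffineFn (lam i)) (hp : IsAffineFn p) (t : ℕ) :
    IsAffineFn (blockFn p (cutsOf lam Jc) t) := by
  cases t with
  | zero => exact hp
  | succ t =>
      show IsAffineFn (cutsOf lam Jc t)
      rcases cutsOf_cases lam Jc t with hc | ⟨j, _, hc⟩
      · rw [hc]; exact isAffineFn_const (-1)
      · rw [hc]; exact affine_neg (hlam j)

lemma block_case1 {lam : Fin (D+1) → (Fin D → ℝ) → ℝ} {p : (Fin D → ℝ) → ℝ}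
    {Jc : Finset (Fin (D+1))} {μv : ℝ} {x : Fin D → ℝ} (n : ℕ)
    (hall : ∀ j ∈ Jc, 0 ≤ lam j x) :
    fan (blockFn p (cutsOf lam Jc)) (fun _ => μv) (n+1) x = max (p x) 0 := by
  apply fan_eq_max_of_cuts_nonpos
  intro t
  show cutsOf lam Jc t x ≤ 0
  rcases cutsOf_cases lam Jc t with hc | ⟨j, hj, hc⟩
  · rw [hc]; norm_num
  · rw [hc]; simpa using hall j hj

lemma block_case2 {lam : Fin (D+1) → (Fin D → ℝ) → ℝ} {p : (Fin D → ℝ) → ℝ}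
    {Jc : Finset (Fin (D+1))} {μv : ℝ} {x : Fin D → ℝ} (hμv : 0 ≤ μv)
    {j : Fin (D+1)} (hj : j ∈ Jc) (hneg : lam j x < 0)
    (hkill : max (p x) 0 ≤ μv * (-(lam j x))) (n : ℕ) (hcard : Jc.card ≤ n) :
    fan (blockFn p (cutsOf lam Jc)) (fun _ => μv) n x = 0 := by
  obtain ⟨t, ht, hte⟩ := cutsOf_mem lam Jc hj
  apply fan_eq_zero_of_kill (fun _ => hμv) t _ n (lt_of_lt_of_le ht hcard)
  show max (p x) 0 ≤ μv * max (cutsOf lam Jc t x) 0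
  rw [hte]
  have hmx : max (-(lam j x)) 0 = -(lam j x) := max_eq_left (by linarith)
  show max (p x) 0 ≤ μv * max (-(lam j x)) 0
  rw [hmx]
  exact hkill

lemma key_sum (D : ℕ) (hD : 2 ≤ D) (lam : Fin (D+1) → (Fin D → ℝ) → ℝ)
    (ℓm : (Fin D → ℝ) → ℝ) (cv : Fin (D+1) → ℝ) (Θ0 η μv : ℝ) (x : Fin D → ℝ)
    (hΘ0 : 1 ≤ Θ0) (hη : 0 < η) (hη1 : η ≤ 1)
    (hlamb : ∀ i, |lam i x| ≤ Θ0) (hlb : |ℓm x| ≤ Θ0)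
    (hμv : 2*Θ0 + 1 ≤ μv * η) (hμpos : 0 ≤ μv)
    (hgood : ∀ i, η < |lam i x|)
    (hdec : ℓm x = ∑ i, cv i * lam i x)
    (hsum1 : ∑ i, lam i x = 1)
    (J : Finset (Fin (D+1))) :
    ∑ k : KT D, coefOf D cv η J k *
        fan (blockFn (headOf lam ℓm (Θ0+1) η J k) (cutsOf lam (cutSet D J k)))
          (fun _ => μv) (D-1) x
    = if 1 ≤ J.card ∧ J.card ≤ D then
        sgn D J * ℓm x * (if ∀ j ∈ J, 0 ≤ lam j x then 1 else 0) else 0 := by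
  obtain ⟨n, hn⟩ : ∃ n, D - 1 = n + 1 := ⟨D - 2, by omega⟩
  have hμη : 0 < μv * η := by linarith
  -- generic kill fact
  have hkill0 : ∀ (p : (Fin D → ℝ) → ℝ) (Jc : Finset (Fin (D+1))) (j : Fin (D+1)),
      j ∈ Jc → Jc.card ≤ D - 1 → lam j x < 0 → max (p x) 0 ≤ 2*Θ0+1 →
      fan (blockFn p (cutsOf lam Jc)) (fun _ => μv) (D-1) x = 0 := by
    intro p Jc j hj hcard hneg hbd
    have hviol : η < -(lam j x) := by
      have := hgood j; rw [abs_of_neg hneg] at this; linarith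
    refine block_case2 hμpos hj hneg ?_ _ hcard
    calc max (p x) 0 ≤ 2*Θ0+1 := hbd
      _ ≤ μv * η := hμv
      _ ≤ μv * (-(lam j x)) := by nlinarith
  rw [Fintype.sum_sum_type]
  by_cases hsmall : 1 ≤ J.card ∧ J.card ≤ D - 1
  · -- small case
    have hnotD : ¬ J.card = D := by omega
    have hif : (1 ≤ J.card ∧ J.card ≤ D) := ⟨hsmall.1, by omega⟩
    rw [if_pos hif]
    have hcoef_inl : ∀ a : Fin (D+1) × Bool, coefOf D cv η J (Sum.inl a) = 0 := by
      intro ⟨j, b⟩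
      simp only [coefOf, if_pos hsmall]
    have hzero_inl : ∑ a : Fin (D+1) × Bool, coefOf D cv η J (Sum.inl a) *
        fan (blockFn (headOf lam ℓm (Θ0+1) η J (Sum.inl a))
          (cutsOf lam (cutSet D J (Sum.inl a)))) (fun _ => μv) (D-1) x = 0 := by
      apply Finset.sum_eq_zero
      intro a _
      rw [hcoef_inl a, zero_mul]
    rw [hzero_inl, zero_add, Fintype.sum_bool]
    have hcoefT : coefOf D cv η J (Sum.inr true) = sgn D J := by
      simp only [coefOf, if_pos hsmall]
    have hcoefF : coefOf D cv η J (Sum.inr false) = -sgn D J := by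
      simp only [coefOf, if_pos hsmall]
    have hheadT : headOf lam ℓm (Θ0+1) η J (Sum.inr true) = fun x => ℓm x + (Θ0+1) := by
      simp only [headOf, if_neg hnotD]
    have hheadF : headOf lam ℓm (Θ0+1) η J (Sum.inr false) = fun _ => (Θ0+1) := by
      simp only [headOf, if_neg hnotD]
    have hcut : ∀ b : Bool, cutSet D J (Sum.inr b) = J := fun _ => rfl
    rw [hcoefT, hcoefF, hheadT, hheadF, hcut, hcut]
    by_cases hpos : ∀ j ∈ J, 0 ≤ lam j x
    · rw [if_pos hpos]
      rw [hn, block_case1 n hpos, block_case1 n hpos]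
      have h1 : max ((fun x => ℓm x + (Θ0+1)) x) 0 = ℓm x + (Θ0+1) := by
        apply max_eq_left
        show (0:ℝ) ≤ ℓm x + (Θ0+1)
        have := abs_le.1 hlb
        linarith [this.1]
      have h2 : max ((fun _ : Fin D → ℝ => (Θ0+1)) x) 0 = Θ0+1 := by
        apply max_eq_left
        show (0:ℝ) ≤ Θ0+1
        linarith
      rw [h1, h2]
      ring
    · rw [if_neg hpos]
      push_neg at hpos
      obtain ⟨j, hj, hneg'⟩ := hpos
      have hneg : lam j x < 0 := hneg'
      have k1 := hkill0 (fun x => ℓm x + (Θ0+1)) J j hj hsmall.2 hneg (by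
        apply max_le
        · show ℓm x + (Θ0+1) ≤ 2*Θ0+1
          have := abs_le.1 hlb
          linarith [this.2]
        · linarith)
      have k2 := hkill0 (fun _ => (Θ0+1)) J j hj hsmall.2 hneg (by
        apply max_le
        · show Θ0+1 ≤ 2*Θ0+1; linarith
        · linarith)
      rw [k1, k2]
      ring
  · by_cases hvert : J.card = D
    · -- vertex case
      have hif : (1 ≤ J.card ∧ J.card ≤ D) := by omega
      rw [if_pos hif]
      have hcoef_inr : ∀ b : Bool, coefOf D cv η J (Sum.inr b) = 0 := by
        intro b
        cases b <;> simp only [coefOf, if_neg hsmall, if_pos hvert]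
      have hzero_inr : ∑ b : Bool, coefOf D cv η J (Sum.inr b) *
          fan (blockFn (headOf lam ℓm (Θ0+1) η J (Sum.inr b))
            (cutsOf lam (cutSet D J (Sum.inr b)))) (fun _ => μv) (D-1) x = 0 := by
        apply Finset.sum_eq_zero
        intro b _
        rw [hcoef_inr b, zero_mul]
      rw [hzero_inr, add_zero, Fintype.sum_prod_type]
      -- per-j inner sums
      obtain ⟨i0, hi0⟩ : ∃ a, Jᶜ = {a} := by
        apply Finset.card_eq_one.1
        rw [Finset.card_compl, hvert]
        simp
      have hcJ : (∑ i ∈ Jᶜ, cv i) = cv i0 := by rw [hi0, Finset.sum_singleton]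
      have hi0J : i0 ∉ J := by
        have : i0 ∈ Jᶜ := by rw [hi0]; exact Finset.mem_singleton_self _
        simpa using this
      have hcardD1 : ∀ j ∈ J, (J.erase j).card ≤ D - 1 := by
        intro j hj
        rw [Finset.card_erase_of_mem hj, hvert]
      have hcoefjT : ∀ j ∈ J, coefOf D cv η J (Sum.inl (j, true))
          = sgn D J * cv i0 / (D * η) := by
        intro j hj
        simp only [coefOf, if_neg hsmall, if_pos hvert, if_pos hj, hcJ]
      have hcoefjF : ∀ j ∈ J, coefOf D cv η J (Sum.inl (j, false))
          = sgn D J * ((cv j - cv i0) - cv i0 / (D * η)) := by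
        intro j hj
        simp only [coefOf, if_neg hsmall, if_pos hvert, if_pos hj, hcJ]
      have hcoefnT : ∀ j, j ∉ J → ∀ b, coefOf D cv η J (Sum.inl (j, b)) = 0 := by
        intro j hj b
        cases b <;> simp only [coefOf, if_neg hsmall, if_pos hvert, if_neg hj]
      have hheadjT : ∀ j, headOf lam ℓm (Θ0+1) η J (Sum.inl (j, true))
          = fun x => lam j x + η := by
        intro j; simp only [headOf, if_pos hvert]
      have hheadjF : ∀ j, headOf lam ℓm (Θ0+1) η J (Sum.inl (j, false)) = lam j := by
        intro j; simp only [headOf, if_pos hvert]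
      have hcutj : ∀ j b, cutSet D J (Sum.inl (j, b)) = J.erase j := fun _ _ => rfl
      by_cases hpos : ∀ j ∈ J, 0 ≤ lam j x
      · rw [if_pos hpos]
        -- each j ∈ J contributes sgn * (cv i0 / D * ... )
        have hterm : ∀ j : Fin (D+1), (∑ b : Bool, coefOf D cv η J (Sum.inl (j, b)) *
            fan (blockFn (headOf lam ℓm (Θ0+1) η J (Sum.inl (j, b)))
              (cutsOf lam (cutSet D J (Sum.inl (j, b))))) (fun _ => μv) (D-1) x)
            = if j ∈ J then
                sgn D J * (cv i0 / D + (cv j - cv i0) * lam j x) else 0 := by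
          intro j
          rw [Fintype.sum_bool]
          by_cases hj : j ∈ J
          · rw [if_pos hj, hcoefjT j hj, hcoefjF j hj, hheadjT j, hheadjF j, hcutj, hcutj]
            have hallerase : ∀ j' ∈ J.erase j, 0 ≤ lam j' x := fun j' hj' =>
              hpos j' (Finset.mem_of_mem_erase hj')
            rw [hn, block_case1 n hallerase, block_case1 n hallerase]
            have hjpos : 0 ≤ lam j x := hpos j hj
            have e1 : max ((fun x => lam j x + η) x) 0 = lam j x + η := by
              apply max_eq_left
              show (0:ℝ) ≤ lam j x + η
              linarith
            have e2 : max (lam j x) 0 = lam j x := max_eq_left hjpos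
            rw [e1, e2]
            have hD0 : (0:ℝ) < (D:ℝ) := by exact_mod_cast (by omega : 0 < D)
            have hDη : (D:ℝ) * η ≠ 0 := mul_ne_zero (ne_of_gt hD0) (ne_of_gt hη)
            field_simp
            ring
          · rw [if_neg hj, hcoefnT j hj true, hcoefnT j hj false]
            ring
        rw [Finset.sum_congr rfl (fun j _ => hterm j)]
        rw [Finset.sum_ite_mem, Finset.univ_inter]
        -- now evaluate the finite sum
        rw [← Finset.mul_sum]
        have hs1 : ∑ j ∈ J, (cv i0 / D + (cv j - cv i0) * lam j x)
            = cv i0 + (ℓm x - cv i0) := by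
          rw [Finset.sum_add_distrib, Finset.sum_const, hvert, nsmul_eq_mul]
          have hJsum : ∑ j ∈ J, lam j x = 1 - lam i0 x := by
            have hcompl := Finset.sum_add_sum_compl J (fun i => lam i x)
            rw [hi0, Finset.sum_singleton, hsum1] at hcompl
            linarith
          have hJdec : ∑ j ∈ J, cv j * lam j x = ℓm x - cv i0 * lam i0 x := by
            have hcompl := Finset.sum_add_sum_compl J (fun i => cv i * lam i x)
            rw [hi0, Finset.sum_singleton, ← hdec] at hcompl
            linarith
          have hexp : ∑ j ∈ J, (cv j - cv i0) * lam j x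
              = (∑ j ∈ J, cv j * lam j x) - cv i0 * ∑ j ∈ J, lam j x := by
            rw [Finset.mul_sum, ← Finset.sum_sub_distrib]
            exact Finset.sum_congr rfl fun j _ => by ring
          rw [hexp, hJdec, hJsum]
          have hD0 : (D:ℝ) ≠ 0 := by
            exact_mod_cast (by omega : D ≠ 0)
          field_simp
          ring
        rw [hs1]
        ring
      · rw [if_neg hpos]
        push_neg at hpos
        obtain ⟨j0, hj0, hneg0⟩ := hpos
        rw [mul_zero]
        apply Finset.sum_eq_zero
        intro j _
        rw [Fintype.sum_bool]
        by_cases hj : j ∈ J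
        · rw [hcoefjT j hj, hcoefjF j hj, hheadjT j, hheadjF j, hcutj, hcutj]
          by_cases hjj : j = j0
          · subst hjj
            have hviol : lam j x < -η := by
              have := hgood j; rw [abs_of_neg hneg0] at this; linarith
            have z1 : fan (blockFn (fun x => lam j x + η) (cutsOf lam (J.erase j)))
                (fun _ => μv) (D-1) x = 0 := by
              rw [hn]
              apply fan_eq_zero_of_head (fun _ => hμpos)
              apply max_eq_right
              show lam j x + η ≤ 0
              linarith
            have z2 : fan (blockFn (lam j) (cutsOf lam (J.erase j)))
                (fun _ => μv) (D-1) x = 0 := by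
              rw [hn]
              apply fan_eq_zero_of_head (fun _ => hμpos)
              apply max_eq_right
              show lam j x ≤ 0
              linarith
            rw [z1, z2]
            ring
          · have hjK : j0 ∈ J.erase j := Finset.mem_erase.2 ⟨fun hc => hjj hc.symm, hj0⟩
            have k1 := hkill0 (fun x => lam j x + η) (J.erase j) j0 hjK (hcardD1 j hj) hneg0 (by
              apply max_le
              · show lam j x + η ≤ 2*Θ0+1
                have := abs_le.1 (hlamb j)
                linarith [this.2]
              · linarith)
            have k2 := hkill0 (lam j) (J.erase j) j0 hjK (hcardD1 j hj) hneg0 (by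
              apply max_le
              · have := abs_le.1 (hlamb j)
                linarith [this.2]
              · linarith)
            rw [k1, k2]
            ring
        · rw [hcoefnT j hj true, hcoefnT j hj false]
          ring
    · -- junk case
      have hif : ¬ (1 ≤ J.card ∧ J.card ≤ D) := by omega
      rw [if_neg hif]
      have hcoef : ∀ k : KT D, coefOf D cv η J k = 0 := by
        intro k
        rcases k with ⟨j, b⟩ | b
        · cases b <;> simp only [coefOf, if_neg hsmall, if_neg hvert]
        · cases b <;> simp only [coefOf, if_neg hsmall, if_neg hvert]
      rw [Finset.sum_eq_zero (fun a _ => by rw [hcoef, zero_mul]),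
        Finset.sum_eq_zero (fun b _ => by rw [hcoef, zero_mul]), add_zero]

lemma isAffineFn_sum {α : Type*} (s : Finset α) (g : α → (Fin D → ℝ) → ℝ)
    (hg : ∀ a, IsAffineFn (g a)) : IsAffineFn (fun x => ∑ a ∈ s, g a x) := by
  classical
  induction s using Finset.induction with
  | empty => simpa using isAffineFn_const (D := D) 0
  | insert a s' hnotmem ih =>
      have : (fun x => ∑ b ∈ insert a s', g b x) = fun x => g a x + ∑ b ∈ s', g b x := by
        funext x; rw [Finset.sum_insert hnotmem]
      rw [this]
      exact affine_add (hg a) ih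

lemma neg_one_powerset_sum (P : Finset (Fin (D+1))) :
    ∑ t ∈ P.powerset, (-1:ℝ)^t.card = if P = ∅ then 1 else 0 := by
  have h := Finset.sum_powerset_neg_one_pow_card (x := P)
  have h2 : ((∑ t ∈ P.powerset, (-1:ℤ)^t.card : ℤ) : ℝ) = ∑ t ∈ P.powerset, (-1:ℝ)^t.card := by
    push_cast; ring
  rw [← h2, h]; split <;> simp

lemma comb_identity (D : ℕ) (hD : 1 ≤ D) (P : Finset (Fin (D+1))) (hP : P.Nonempty) :
    ((-1:ℝ))^D + ∑ J : Finset (Fin (D+1)),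
      (if 1 ≤ J.card ∧ J.card ≤ D then
        ((-1:ℝ)^D * (-1)^J.card) * (if J ⊆ P then (1:ℝ) else 0) else 0)
    = if P = Finset.univ then 1 else 0 := by
  classical
  set g : Finset (Fin (D+1)) → ℝ :=
    fun J => ((-1:ℝ)^D * (-1)^J.card) * (if J ⊆ P then (1:ℝ) else 0) with hg
  have hunivcard : (Finset.univ : Finset (Fin (D+1))).card = D + 1 := by simp
  have hcond : ∀ J : Finset (Fin (D+1)),
      (1 ≤ J.card ∧ J.card ≤ D) ↔ ¬(J = ∅ ∨ J = Finset.univ) := by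
    intro J
    have h1 : J.card ≤ D + 1 := by
      simpa using Finset.card_le_card (Finset.subset_univ J)
    constructor
    · rintro ⟨ha, hb⟩ (rfl | rfl)
      · simp at ha
      · rw [hunivcard] at hb; omega
    · intro hne
      push_neg at hne
      refine ⟨?_, ?_⟩
      · rcases Finset.eq_empty_or_nonempty J with rfl | hne'
        · exact absurd hne.1 Finset.not_nonempty_empty
        · exact Finset.card_pos.2 hne'
      · by_contra hgt
        have : J.card = D + 1 := by omega
        exact hne.2 (Finset.eq_univ_of_card J (by simpa using this))
  -- pointwise rewriting of the summand
  have hpt : ∀ J : Finset (Fin (D+1)),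
      (if 1 ≤ J.card ∧ J.card ≤ D then g J else 0)
        = g J - (if J ∈ ({∅, Finset.univ} : Finset (Finset (Fin (D+1)))) then g J else 0) := by
    intro J
    by_cases hmem : J = ∅ ∨ J = Finset.univ
    · rw [if_neg (fun hc => ((hcond J).1 hc) hmem), if_pos (by simpa using hmem)]
      ring
    · rw [if_pos ((hcond J).2 hmem), if_neg (by simpa using hmem)]
      ring
  rw [Finset.sum_congr rfl (fun J _ => hpt J), Finset.sum_sub_distrib]
  -- total sum is zero
  have hT : ∑ J : Finset (Fin (D+1)), g J = 0 := by
    have hptg : ∀ J : Finset (Fin (D+1)),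
        g J = if J ∈ P.powerset then ((-1:ℝ)^D * (-1)^J.card) else 0 := by
      intro J
      simp only [hg]
      by_cases hJ : J ⊆ P
      · rw [if_pos hJ, if_pos (Finset.mem_powerset.2 hJ), mul_one]
      · rw [if_neg hJ, if_neg (fun hc => hJ (Finset.mem_powerset.1 hc)), mul_zero]
    rw [Finset.sum_congr rfl (fun J _ => hptg J), Finset.sum_ite_mem, Finset.univ_inter,
      ← Finset.mul_sum, neg_one_powerset_sum, if_neg (Finset.nonempty_iff_ne_empty.1 hP),
      mul_zero]
  rw [hT]
  -- sum over the pair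
  have hpairne : (∅ : Finset (Fin (D+1))) ≠ Finset.univ := by
    intro hc
    have := hunivcard
    rw [← hc] at this
    simp at this
  rw [Finset.sum_ite_mem, Finset.univ_inter, Finset.sum_pair hpairne]
  have hgempty : g ∅ = (-1:ℝ)^D := by
    simp only [hg]; simp
  have hguniv : g Finset.univ = if P = Finset.univ then (-1:ℝ) else 0 := by
    simp only [hg, hunivcard]
    by_cases hPu : P = Finset.univ
    · rw [if_pos (by rw [hPu]), if_pos hPu, mul_one, ← pow_add]
      exact Odd.neg_one_pow ⟨D, by ring⟩
    · rw [if_neg (fun hc => hPu (Finset.univ_subset_iff.1 hc)), if_neg hPu, mul_zero]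
  rw [hgempty, hguniv]
  split <;> ring

/-! ### measure lemmas -/

lemma zeroset_null {f : (Fin D → ℝ) → ℝ} (hf : IsAffineFn f) (hnz : ∃ x, f x ≠ 0) :
    volume {x : Fin D → ℝ | f x = 0} = 0 := by
  obtain ⟨w, r, hw⟩ := hf
  -- build the affine map
  let fl : (Fin D → ℝ) →ₗ[ℝ] ℝ :=
    { toFun := fun x => ∑ d, w d * x d
      map_add' := by
        intro a b
        simp only [Pi.add_apply, mul_add]
        rw [Finset.sum_add_distrib]
      map_smul' := by
        intro c a
        simp only [Pi.smul_apply, smul_eq_mul, RingHom.id_apply]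
        rw [Finset.mul_sum]
        exact Finset.sum_congr rfl fun d _ => by ring }
  let fa : (Fin D → ℝ) →ᵃ[ℝ] ℝ := AffineMap.mk' f fl 0 (by
    intro p
    show f p = fl (p - 0) + f 0
    rw [hw p, hw 0]
    show _ = (∑ d, w d * (p - 0) d) + _
    simp)
  obtain ⟨x0, hx0⟩ := hnz
  have hset : {x : Fin D → ℝ | f x = 0}
      = (AffineSubspace.comap fa (AffineSubspace.mk' (0:ℝ) ⊥) : Set (Fin D → ℝ)) := by
    ext y
    have : fa y = f y := rfl
    simp [AffineSubspace.mem_comap, AffineSubspace.mem_mk', this]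
  rw [hset]
  apply Measure.addHaar_affineSubspace
  intro htop
  apply hx0
  have hx0' : x0 ∈ (AffineSubspace.comap fa (AffineSubspace.mk' (0:ℝ) ⊥)) :=
    htop ▸ AffineSubspace.mem_top ℝ _ x0
  have : fa x0 = f x0 := rfl
  simpa [AffineSubspace.mem_comap, AffineSubspace.mem_mk', this] using hx0'

lemma exists_eta (M : ℕ) (B δ : ℝ) (hB : 0 < B) (hδ : 0 < δ)
    (L : Fin M → Fin (D+1) → (Fin D → ℝ) → ℝ)
    (hL : ∀ m i, IsAffineFn (L m i))
    (hnz : ∀ m i, ∃ x, L m i x ≠ 0) :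
    ∃ η : ℝ, 0 < η ∧ η ≤ 1 ∧
      volume {x : Fin D → ℝ | x ∈ Set.Icc (fun _ => -B) (fun _ => (B:ℝ)) ∧
        ∃ m i, |L m i x| ≤ η} < ENNReal.ofReal δ := by
  classical
  set box : Set (Fin D → ℝ) := Set.Icc (fun _ => -B) (fun _ => (B:ℝ)) with hbox
  have hboxc : IsCompact box := isCompact_Icc
  have hboxm : volume box ≠ ⊤ := hboxc.measure_lt_top.ne
  set A : Fin M → Fin (D+1) → ℕ → Set (Fin D → ℝ) :=
    fun m i n => {x | x ∈ box ∧ |L m i x| ≤ 1/(n+1)} with hA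
  have hclosed : ∀ m i n, IsClosed (A m i n) := by
    intro m i n
    have hcont : Continuous (L m i) := affine_continuous (hL m i)
    exact isClosed_Icc.inter (isClosed_le hcont.abs continuous_const)
  have htend : ∀ m i, Filter.Tendsto (fun n => volume (A m i n)) Filter.atTop (nhds 0) := by
    intro m i
    have hanti : Antitone (A m i) := by
      intro a b hab x hx
      refine ⟨hx.1, hx.2.trans ?_⟩
      apply div_le_div_of_nonneg_left one_pos.le (by positivity)
      push_cast
      have := (Nat.cast_le (α := ℝ)).2 hab
      linarith
    have hInter : volume (⋂ n, A m i n) = 0 := by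
      refine measure_mono_null ?_ (zeroset_null (hL m i) (hnz m i))
      · intro x hx
        simp only [Set.mem_iInter, hA, Set.mem_setOf_eq] at hx
        have hle : ∀ n : ℕ, |L m i x| ≤ 1/(n+1) := fun n => (hx n).2
        have : |L m i x| ≤ 0 := by
          by_contra hc
          push_neg at hc
          obtain ⟨n, hn⟩ := exists_nat_one_div_lt hc
          exact absurd (hle n) (by push_cast at hn ⊢; linarith)
        simpa [abs_nonpos_iff] using this
    have := tendsto_measure_iInter_atTop
      (fun n => (hclosed m i n).measurableSet.nullMeasurableSet) hanti
      ⟨0, ((measure_mono (fun x hx => hx.1)).trans_lt (lt_of_le_of_ne le_top hboxm)).ne⟩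
    rw [hInter] at this
    exact this
  have hsum : Filter.Tendsto
      (fun n => ∑ m : Fin M, ∑ i : Fin (D+1), volume (A m i n)) Filter.atTop (nhds 0) := by
    have h0 : (0 : ENNReal) = ∑ m : Fin M, ∑ i : Fin (D+1), (0:ENNReal) := by simp
    rw [h0]
    exact tendsto_finset_sum _ fun m _ => tendsto_finset_sum _ fun i _ => htend m i
  have hev : ∀ᶠ n in Filter.atTop,
      (∑ m : Fin M, ∑ i : Fin (D+1), volume (A m i n)) < ENNReal.ofReal δ :=
    hsum.eventually_lt_const (by simpa using ENNReal.ofReal_pos.2 hδ)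
  obtain ⟨n, hn⟩ := hev.exists
  refine ⟨1/(n+1), by positivity, ?_, ?_⟩
  · rw [div_le_one (by positivity)]
    push_cast
    linarith [Nat.cast_nonneg (α := ℝ) n]
  · refine lt_of_le_of_lt ?_ hn
    have hsub : {x : Fin D → ℝ | x ∈ box ∧ ∃ m i, |L m i x| ≤ 1/(n+1)}
        ⊆ ⋃ m : Fin M, ⋃ i : Fin (D+1), A m i n := by
      rintro x ⟨hxb, m, i, hmi⟩
      exact Set.mem_iUnion.2 ⟨m, Set.mem_iUnion.2 ⟨i, ⟨hxb, hmi⟩⟩⟩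
    refine (measure_mono hsub).trans ?_
    refine (measure_iUnion_fintype_le _ _).trans ?_
    exact Finset.sum_le_sum fun m _ => measure_iUnion_fintype_le _ _

end ReluAux


open ReluAux in
/-- The wide-network half of the ReLU duality theorem for multivariate networks:
a function `h` that is piecewise affine over a finite cover of `[-B, B]^D` by
`D`-simplices with pairwise disjoint interiors is represented, up to arbitrarily
small Lebesgue measure, by an affine function plus finitely many fan-shaped
terms. -/
theorem relu_duality_wide (D : ℕ) (hD : 2 ≤ D) (B : ℝ) (hB : 0 < B)
    (M : ℕ) (v : Fin M → Fin (D + 1) → (Fin D → ℝ))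
    (hv : ∀ m, AffineIndependent ℝ (v m))
    (S : Fin M → Set (Fin D → ℝ))
    (hS : ∀ m, S m = convexHull ℝ (Set.range (v m)))
    (hint : ∀ m m', m ≠ m' → interior (S m) ∩ interior (S m') = ∅)
    (hcover : Set.Icc (fun _ => -B) (fun _ => (B : ℝ)) ⊆ ⋃ m, S m)
    (ℓ : Fin M → (Fin D → ℝ) → ℝ) (hℓ : ∀ m, IsAffineFn (ℓ m))
    (h : (Fin D → ℝ) → ℝ)
    (hh : ∀ m, ∀ x ∈ interior (S m), h x = ℓ m x) :
    ∀ δ > (0 : ℝ),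
      ∃ (N : ℕ) (g₀ : (Fin D → ℝ) → ℝ)
        (hw : Fin N → ℕ → (Fin D → ℝ) → ℝ) (μ : Fin N → ℕ → ℝ) (c : Fin N → ℝ),
        IsAffineFn g₀ ∧
        (∀ j, ∀ i < D, IsAffineFn (hw j i)) ∧ (∀ j, ∀ i < D - 1, 0 < μ j i) ∧
        volume {x : Fin D → ℝ | x ∈ Set.Icc (fun _ => -B) (fun _ => (B : ℝ)) ∧
            h x ≠ g₀ x + ∑ j, c j * fan (hw j) (μ j) (D - 1) x} <
          ENNReal.ofReal δ := by
  classical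
  intro δ hδ
  -- barycentric coordinate systems
  have hbary : ∀ m : Fin M, ∃ b : AffineBasis (Fin (D+1)) ℝ (Fin D → ℝ), ⇑b = v m := by
    intro m
    refine ⟨⟨v m, hv m, ?_⟩, rfl⟩
    rw [(hv m).affineSpan_eq_top_iff_card_eq_finrank_add_one]
    simp
  choose bary hbary using hbary
  set L : Fin M → Fin (D+1) → (Fin D → ℝ) → ℝ := fun m i x => (bary m).coord i x with hLdef
  have hLaff : ∀ m i, IsAffineFn (L m i) := fun m i => isAffineFn_affineMap ((bary m).coord i)
  have hLsum1 : ∀ m x, ∑ i, L m i x = 1 := fun m x => (bary m).sum_coord_apply_eq_one x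
  have hLv : ∀ m i j, L m i (v m j) = if i = j then 1 else 0 := by
    intro m i j
    show (bary m).coord i (v m j) = _
    rw [← hbary m]
    exact (bary m).coord_apply i j
  have hnz : ∀ m i, ∃ x, L m i x ≠ 0 := fun m i => ⟨v m i, by rw [hLv]; simp⟩
  have hSsub : ∀ m, S m ⊆ {x | ∀ i, 0 ≤ L m i x} := by
    intro m
    rw [hS m]
    intro x hx i
    have : convexHull ℝ (Set.range (v m)) ⊆ {y | 0 ≤ L m i y} := by
      apply convexHull_min
      · rintro y ⟨j, rfl⟩
        simp only [Set.mem_setOf_eq, hLv m i j]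
        split <;> norm_num
      · exact (convex_Ici (0:ℝ)).affine_preimage ((bary m).coord i)
    exact this hx
  have hSint : ∀ m, interior (S m) = {x | ∀ i, 0 < L m i x} := by
    intro m
    rw [hS m, ← hbary m]
    exact (bary m).interior_convexHull
  -- affine decomposition of ℓ m in barycentric coordinates
  choose wl rl hwl using hℓ
  have hdec : ∀ m x, ℓ m x = ∑ i, ℓ m (v m i) * L m i x := by
    intro m x
    have hxx : ∑ i, L m i x • v m i = x := by
      have h0 := (bary m).linear_combination_coord_eq_self x
      rw [hbary m] at h0
      exact h0
    have hxd : ∀ d, x d = ∑ i, L m i x * v m i d := by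
      intro d
      conv_lhs => rw [← hxx]
      rw [Finset.sum_apply]
      exact Finset.sum_congr rfl fun i _ => rfl
    have h1 : (∑ d, wl m d * ∑ i, L m i x * v m i d)
        = ∑ i, L m i x * (∑ d, wl m d * v m i d) := by
      calc (∑ d, wl m d * ∑ i, L m i x * v m i d)
          = ∑ d, ∑ i, L m i x * (wl m d * v m i d) := by
            refine Finset.sum_congr rfl fun d _ => ?_
            rw [Finset.mul_sum]
            exact Finset.sum_congr rfl fun i _ => by ring
        _ = ∑ i, ∑ d, L m i x * (wl m d * v m i d) := Finset.sum_comm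
        _ = ∑ i, L m i x * (∑ d, wl m d * v m i d) := by
            refine Finset.sum_congr rfl fun i _ => ?_
            rw [Finset.mul_sum]
    calc ℓ m x = (∑ d, wl m d * x d) + rl m := hwl m x
      _ = (∑ d, wl m d * ∑ i, L m i x * v m i d) + rl m := by
          congr 1
          exact Finset.sum_congr rfl fun d _ => by rw [← hxd d]
      _ = (∑ i, L m i x * (∑ d, wl m d * v m i d)) + ∑ i, L m i x * rl m := by
          rw [h1, ← Finset.sum_mul, hLsum1 m x, one_mul]
      _ = ∑ i, ℓ m (v m i) * L m i x := by
          rw [← Finset.sum_add_distrib]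
          refine Finset.sum_congr rfl fun i _ => ?_
          rw [hwl m (v m i)]
          ring
  -- global bound Θ0
  have hblℓ : ∀ m, ∃ C, 0 ≤ C ∧ ∀ x ∈ Set.Icc (fun _ => -B) (fun _ => (B:ℝ)), |ℓ m x| ≤ C :=
    fun m => affine_bound ⟨wl m, rl m, hwl m⟩ B hB.le
  choose Cl hCl0 hCl using hblℓ
  have hblL : ∀ m i, ∃ C, 0 ≤ C ∧ ∀ x ∈ Set.Icc (fun _ => -B) (fun _ => (B:ℝ)), |L m i x| ≤ C :=
    fun m i => affine_bound (hLaff m i) B hB.le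
  choose CL hCL0 hCL using hblL
  set Θ0 : ℝ := 1 + (∑ m, Cl m) + (∑ m, ∑ i, CL m i) with hΘ0def
  have hsumCl : 0 ≤ ∑ m, Cl m := Finset.sum_nonneg fun m _ => hCl0 m
  have hsumCL : 0 ≤ ∑ m, ∑ i, CL m i :=
    Finset.sum_nonneg fun m _ => Finset.sum_nonneg fun i _ => hCL0 m i
  have hΘ0ge1 : 1 ≤ Θ0 := by rw [hΘ0def]; linarith
  have hΘℓ : ∀ m, ∀ x ∈ Set.Icc (fun _ => -B) (fun _ => (B:ℝ)), |ℓ m x| ≤ Θ0 := by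
    intro m x hx
    refine (hCl m x hx).trans ?_
    have : Cl m ≤ ∑ m', Cl m' := Finset.single_le_sum (fun m' _ => hCl0 m') (Finset.mem_univ m)
    rw [hΘ0def]; linarith
  have hΘL : ∀ m i, ∀ x ∈ Set.Icc (fun _ => -B) (fun _ => (B:ℝ)), |L m i x| ≤ Θ0 := by
    intro m i x hx
    refine (hCL m i x hx).trans ?_
    have h1 : CL m i ≤ ∑ i', CL m i' :=
      Finset.single_le_sum (fun i' _ => hCL0 m i') (Finset.mem_univ i)
    have h2 : (∑ i', CL m i') ≤ ∑ m', ∑ i', CL m' i' :=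
      Finset.single_le_sum (fun m' _ => Finset.sum_nonneg fun i' _ => hCL0 m' i')
        (Finset.mem_univ m)
    rw [hΘ0def]; linarith
  -- choose η
  obtain ⟨η, hη, hη1, hηvol⟩ := exists_eta M B δ hB hδ L hLaff hnz
  set μv : ℝ := (2*Θ0+1)/η with hμvdef
  have hμveq : μv * η = 2*Θ0+1 := div_mul_cancel₀ _ (ne_of_gt hη)
  have hμvpos : 0 < μv := by rw [hμvdef]; positivity
  -- the block index type and enumeration
  let e : Fin (Fintype.card (Fin M × (Finset (Fin (D+1)) × KT D)))
      ≃ (Fin M × (Finset (Fin (D+1)) × KT D)) := (Fintype.equivFin _).symm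
  refine ⟨Fintype.card (Fin M × (Finset (Fin (D+1)) × KT D)),
    (fun x => ∑ m, (-1:ℝ)^D * ℓ m x),
    (fun j => blockFn (headOf (L (e j).1) (ℓ (e j).1) (Θ0+1) η (e j).2.1 (e j).2.2)
      (cutsOf (L (e j).1) (cutSet D (e j).2.1 (e j).2.2))),
    (fun _ _ => μv),
    (fun j => coefOf D (fun i => ℓ (e j).1 (v (e j).1 i)) η (e j).2.1 (e j).2.2),
    ?_, ?_, ?_, ?_⟩
  · exact isAffineFn_sum Finset.univ _ (fun m => affine_smul ⟨wl m, rl m, hwl m⟩ ((-1:ℝ)^D))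
  · intro j i _
    exact isAffineFn_blockFn_cuts (L (e j).1) _ _ (hLaff (e j).1)
      (isAffineFn_headOf _ _ _ _ _ _ (hLaff (e j).1) ⟨wl (e j).1, rl (e j).1, hwl (e j).1⟩) i
  · intro j i _
    exact hμvpos
  · refine lt_of_le_of_lt (measure_mono ?_) hηvol
    rintro x ⟨hxb, hxne⟩
    refine ⟨hxb, ?_⟩
    by_contra hc
    push_neg at hc
    apply hxne
    -- notation for the per-block contribution
    set f : (Fin M × (Finset (Fin (D+1)) × KT D)) → ℝ :=
      fun b => coefOf D (fun i => ℓ b.1 (v b.1 i)) η b.2.1 b.2.2 *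
        fan (blockFn (headOf (L b.1) (ℓ b.1) (Θ0+1) η b.2.1 b.2.2)
          (cutsOf (L b.1) (cutSet D b.2.1 b.2.2))) (fun _ => μv) (D-1) x with hfdef
    have he : (∑ j, coefOf D (fun i => ℓ (e j).1 (v (e j).1 i)) η (e j).2.1 (e j).2.2 *
        fan (blockFn (headOf (L (e j).1) (ℓ (e j).1) (Θ0+1) η (e j).2.1 (e j).2.2)
          (cutsOf (L (e j).1) (cutSet D (e j).2.1 (e j).2.2))) (fun _ => μv) (D-1) x)
        = ∑ b, f b := Equiv.sum_comp e f
    have hkey : ∀ (m : Fin M) (J : Finset (Fin (D+1))),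
        (∑ k : KT D, coefOf D (fun i => ℓ m (v m i)) η J k *
          fan (blockFn (headOf (L m) (ℓ m) (Θ0+1) η J k) (cutsOf (L m) (cutSet D J k)))
            (fun _ => μv) (D-1) x)
        = if 1 ≤ J.card ∧ J.card ≤ D then
            sgn D J * ℓ m x * (if ∀ j ∈ J, 0 ≤ L m j x then 1 else 0) else 0 := by
      intro m J
      exact key_sum D hD (L m) (ℓ m) _ Θ0 η μv x hΘ0ge1 hη hη1
        (fun i => hΘL m i x hxb) (hΘℓ m x hxb) (le_of_eq hμveq.symm) hμvpos.le
        (fun i => hc m i) (hdec m x) (hLsum1 m x) J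
    have hPex : ∀ m, ∃ i, 0 ≤ L m i x := by
      intro m
      by_contra hno
      push_neg at hno
      have hlt : (∑ i, L m i x) < 0 :=
        Finset.sum_neg (fun i _ => hno i) Finset.univ_nonempty
      rw [hLsum1 m x] at hlt
      linarith
    have hmsum : ∀ m : Fin M, ((-1:ℝ)^D * ℓ m x + ∑ J : Finset (Fin (D+1)),
        (if 1 ≤ J.card ∧ J.card ≤ D then
          sgn D J * ℓ m x * (if ∀ j ∈ J, 0 ≤ L m j x then 1 else 0) else 0))
        = ℓ m x * (if ∀ i, 0 < L m i x then 1 else 0) := by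
      intro m
      set P : Finset (Fin (D+1)) := Finset.univ.filter (fun i => 0 ≤ L m i x) with hPdef
      have hPmem : ∀ i, i ∈ P ↔ 0 ≤ L m i x := by
        intro i; simp [hPdef]
      have hPne : P.Nonempty := by
        obtain ⟨i, hi⟩ := hPex m
        exact ⟨i, (hPmem i).2 hi⟩
      have hci := comb_identity D (by omega) P hPne
      have hsummand : ∀ J : Finset (Fin (D+1)),
          (if 1 ≤ J.card ∧ J.card ≤ D then
            sgn D J * ℓ m x * (if ∀ j ∈ J, 0 ≤ L m j x then 1 else 0) else 0)
          = ℓ m x * (if 1 ≤ J.card ∧ J.card ≤ D then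
              ((-1:ℝ)^D * (-1)^J.card) * (if J ⊆ P then (1:ℝ) else 0) else 0) := by
        intro J
        have hiff : (∀ j ∈ J, 0 ≤ L m j x) ↔ J ⊆ P :=
          ⟨fun ha j hj => (hPmem j).2 (ha j hj), fun ha j hj => (hPmem j).1 (ha hj)⟩
        by_cases hcond : 1 ≤ J.card ∧ J.card ≤ D
        · rw [if_pos hcond, if_pos hcond]
          by_cases hsub : J ⊆ P
          · rw [if_pos (hiff.2 hsub), if_pos hsub]
            show sgn D J * ℓ m x * 1 = _
            rw [sgn]
            ring
          · rw [if_neg (fun hc' => hsub (hiff.1 hc')), if_neg hsub]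
            ring
        · rw [if_neg hcond, if_neg hcond]
          ring
      rw [Finset.sum_congr rfl (fun J _ => hsummand J), ← Finset.mul_sum]
      have hfactor : (-1:ℝ)^D * ℓ m x + ℓ m x * (∑ J : Finset (Fin (D+1)),
          (if 1 ≤ J.card ∧ J.card ≤ D then
            ((-1:ℝ)^D * (-1)^J.card) * (if J ⊆ P then (1:ℝ) else 0) else 0))
          = ℓ m x * (((-1:ℝ))^D + ∑ J : Finset (Fin (D+1)),
            (if 1 ≤ J.card ∧ J.card ≤ D then
              ((-1:ℝ)^D * (-1)^J.card) * (if J ⊆ P then (1:ℝ) else 0) else 0)) := by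
        ring
      rw [hfactor, hci]
      congr 1
      refine if_congr ?_ rfl rfl
      constructor
      · intro hPu i
        have hmem : i ∈ P := hPu ▸ Finset.mem_univ i
        have h0 : 0 ≤ L m i x := (hPmem i).1 hmem
        rcases h0.lt_or_eq with hlt | heq
        · exact hlt
        · exfalso
          have hgi := hc m i
          rw [← heq] at hgi
          simp only [abs_zero] at hgi
          linarith
      · intro hpos
        apply Finset.eq_univ_of_forall
        intro i
        exact (hPmem i).2 (hpos i).le
    have hblocks : (∑ b, f b)
        = ∑ m, ∑ J : Finset (Fin (D+1)),
          (if 1 ≤ J.card ∧ J.card ≤ D then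
            sgn D J * ℓ m x * (if ∀ j ∈ J, 0 ≤ L m j x then 1 else 0) else 0) := by
      rw [Fintype.sum_prod_type]
      refine Finset.sum_congr rfl fun m _ => ?_
      rw [Fintype.sum_prod_type]
      exact Finset.sum_congr rfl fun J _ => hkey m J
    have htotal : (∑ m, (-1:ℝ)^D * ℓ m x) + ∑ b, f b
        = ∑ m, ℓ m x * (if ∀ i, 0 < L m i x then 1 else 0) := by
      rw [hblocks, ← Finset.sum_add_distrib]
      exact Finset.sum_congr rfl fun m _ => hmsum m
    obtain ⟨Sm0, ⟨m0, hm0e⟩, hm0⟩ := hcover hxb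
    rw [← hm0e] at hm0
    have hm0pos : ∀ i, 0 < L m0 i x := by
      intro i
      have h0 := hSsub m0 hm0 i
      rcases h0.lt_or_eq with hlt | heq
      · exact hlt
      · exfalso
        have hgi := hc m0 i
        rw [← heq] at hgi
        simp only [abs_zero] at hgi
        linarith
    have huniq : ∀ m, m ≠ m0 → ¬(∀ i, 0 < L m i x) := by
      intro m hm hpos
      have hx1 : x ∈ interior (S m) := by rw [hSint m]; exact hpos
      have hx2 : x ∈ interior (S m0) := by rw [hSint m0]; exact hm0pos
      have hdisj := hint m m0 hm
      exact absurd (Set.mem_inter hx1 hx2) (by rw [hdisj]; exact Set.notMem_empty x)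
    have hfin : ∑ m, ℓ m x * (if ∀ i, 0 < L m i x then 1 else 0) = h x := by
      rw [Finset.sum_eq_single m0]
      · rw [if_pos hm0pos, mul_one]
        exact (hh m0 x (by rw [hSint m0]; exact hm0pos)).symm
      · intro m _ hm
        rw [if_neg (huniq m hm), mul_zero]
      · intro habs
        exact absurd (Finset.mem_univ m0) habs
    rw [he, htotal, hfin]
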